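/- Taylor expansion of the holomorphic functional calculus: Let A be a unital Banach algebra, f holomorphic on an open set U ⊂ ℂ, and a ∈ A with spec(a) ⊂ U. Then for all b ∈ A of sufficiently small norm, f(a+b) = ∑_{j=0}^∞ (1/(2πi)) ∮_γ f(ζ)(ζ-a)^{-1} b (ζ-a)^{-1} b ⋯ b (ζ-a)^{-1} dζ (the j-th term containing j factors of b and j+1 resolvent factors), with the series converging absolutely in norm; in particular the map a ↦ f(a) is analytic on {a : spec(a) ⊂ U}. -/

import Mathlib

open Metric

private lemma taylor_aux_pow_mul_norm {A : Type*} [NormedRing A] (x y : A) :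
    ∀ j : ℕ, ‖x ^ j * y‖ ≤ ‖x‖ ^ j * ‖y‖
  | 0 => by simp
  | j + 1 => by
    calc ‖x ^ (j + 1) * y‖ = ‖x * (x ^ j * y)‖ := by rw [pow_succ', mul_assoc]
    _ ≤ ‖x‖ * ‖x ^ j * y‖ := norm_mul_le _ _
    _ ≤ ‖x‖ * (‖x‖ ^ j * ‖y‖) :=
        mul_le_mul_of_nonneg_left (taylor_aux_pow_mul_norm x y j) (norm_nonneg x)
    _ = ‖x‖ ^ (j + 1) * ‖y‖ := by ring

/-- Taylor expansion of the holomorphic functional calculus: for `b` of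
sufficiently small norm,
`f(a+b) = ∑_{j=0}^∞ (1/2πi) ∮ f(ζ)(ζ-a)⁻¹ (b (ζ-a)⁻¹)^j dζ`
(the `j`-th term containing `j` factors of `b` and `j+1` resolvent factors),
with absolute convergence in norm.  Both `f(a+b)` and the terms of the series
are given by the Cauchy integral over a circle encircling `spec a`. -/
theorem taylor_functional_calculus (A : Type*) [NormedRing A]
    [NormedAlgebra ℂ A] [CompleteSpace A] (a : A) (U : Set ℂ) (hU : IsOpen U)
    (f : ℂ → ℂ) (hf : DifferentiableOn ℂ f U) (c : ℂ) (R : ℝ) (hR : 0 < R)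
    (hspec : spectrum ℂ a ⊆ ball c R) (hUc : closedBall c R ⊆ U) :
    ∃ ε > (0 : ℝ), ∀ b : A, ‖b‖ < ε →
      Summable (fun j : ℕ =>
        ‖(2 * Real.pi * Complex.I)⁻¹ •
            ∮ ζ in C(c, R), f ζ •
              ((Ring.inverse (algebraMap ℂ A ζ - a) * b) ^ j *
                Ring.inverse (algebraMap ℂ A ζ - a))‖) ∧
      (2 * Real.pi * Complex.I)⁻¹ •
          (∮ ζ in C(c, R), f ζ • Ring.inverse (algebraMap ℂ A ζ - (a + b))) =
        ∑' j : ℕ,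
          (2 * Real.pi * Complex.I)⁻¹ •
            ∮ ζ in C(c, R), f ζ •
              ((Ring.inverse (algebraMap ℂ A ζ - a) * b) ^ j *
                Ring.inverse (algebraMap ℂ A ζ - a)) := by
  have hsubU : sphere c R ⊆ U := fun z hz => hUc (sphere_subset_closedBall hz)
  -- every point on the circle is in the resolvent set
  have hunit : ∀ ζ ∈ sphere c R, IsUnit (algebraMap ℂ A ζ - a) := by
    intro ζ hζ
    rw [← spectrum.notMem_iff]
    intro hmem
    have h1 := hspec hmem
    rw [mem_ball] at h1
    rw [mem_sphere] at hζ
    exact absurd h1 (by rw [hζ]; exact lt_irrefl R)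
  -- continuity of the resolvent on the circle
  have hcont : ∀ ζ ∈ sphere c R,
      ContinuousAt (fun z : ℂ => Ring.inverse (algebraMap ℂ A z - a)) ζ := by
    intro ζ hζ
    have h1 : ContinuousAt (fun z : ℂ => algebraMap ℂ A z - a) ζ :=
      ((continuous_algebraMap ℂ A).sub continuous_const).continuousAt
    have h2 : ContinuousAt Ring.inverse (algebraMap ℂ A ζ - a) := by
      have := NormedRing.inverse_continuousAt (hunit ζ hζ).unit
      rwa [IsUnit.unit_spec] at this
    have h3 : ContinuousAt (Ring.inverse ∘ fun z : ℂ => algebraMap ℂ A z - a) ζ :=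
      ContinuousAt.comp (x := ζ) h2 h1
    exact h3
  obtain ⟨M, hM⟩ := (isCompact_sphere c R).exists_bound_of_continuousOn
    (fun ζ hζ => (hcont ζ hζ).continuousWithinAt)
  obtain ⟨Cf, hCf⟩ := (isCompact_sphere c R).exists_bound_of_continuousOn
    (hf.continuousOn.mono hsubU)
  set M' : ℝ := max M 0 with hM'def
  set Cf' : ℝ := max Cf 0 with hCf'def
  have hM'0 : 0 ≤ M' := le_max_right _ _
  have hCf'0 : 0 ≤ Cf' := le_max_right _ _
  have hM' : ∀ ζ ∈ sphere c R, ‖Ring.inverse (algebraMap ℂ A ζ - a)‖ ≤ M' :=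
    fun ζ hζ => le_trans (hM ζ hζ) (le_max_left _ _)
  have hCf' : ∀ ζ ∈ sphere c R, ‖f ζ‖ ≤ Cf' :=
    fun ζ hζ => le_trans (hCf ζ hζ) (le_max_left _ _)
  refine ⟨(M' + 1)⁻¹, by positivity, fun b hb => ?_⟩
  have hb0 : 0 ≤ ‖b‖ := norm_nonneg b
  set q : ℝ := M' * ‖b‖ with hq
  have hq0 : 0 ≤ q := mul_nonneg hM'0 hb0
  have hq1 : q < 1 := by
    have h1 : ‖b‖ * (M' + 1) < 1 := by
      rw [← lt_div_iff₀ (by positivity)]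
      simpa [div_eq_inv_mul] using hb
    nlinarith
  -- norm bound for `rζ * b`
  have hrb : ∀ ζ ∈ sphere c R, ‖Ring.inverse (algebraMap ℂ A ζ - a) * b‖ ≤ q := by
    intro ζ hζ
    calc ‖Ring.inverse (algebraMap ℂ A ζ - a) * b‖
        ≤ ‖Ring.inverse (algebraMap ℂ A ζ - a)‖ * ‖b‖ := norm_mul_le _ _
    _ ≤ M' * ‖b‖ := mul_le_mul_of_nonneg_right (hM' ζ hζ) hb0
  have hrb1 : ∀ ζ ∈ sphere c R,
      ‖Ring.inverse (algebraMap ℂ A ζ - a) * b‖ < 1 :=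
    fun ζ hζ => lt_of_le_of_lt (hrb ζ hζ) hq1
  -- Neumann series for the perturbed resolvent
  have hNeu : ∀ ζ ∈ sphere c R,
      HasSum (fun j : ℕ => (Ring.inverse (algebraMap ℂ A ζ - a) * b) ^ j *
          Ring.inverse (algebraMap ℂ A ζ - a))
        (Ring.inverse (algebraMap ℂ A ζ - (a + b))) := by
    intro ζ hζ
    set u : Aˣ := (hunit ζ hζ).unit with hu
    have hus : (u : A) = algebraMap ℂ A ζ - a := (hunit ζ hζ).unit_spec
    have hru : Ring.inverse (algebraMap ℂ A ζ - a) = (↑u⁻¹ : A) := by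
      rw [← hus, Ring.inverse_unit]
    set t : A := Ring.inverse (algebraMap ℂ A ζ - a) * b with ht
    have hlt : ‖t‖ < 1 := hrb1 ζ hζ
    have h := (hasSum_geom_series_inverse t hlt).mul_right
      (Ring.inverse (algebraMap ℂ A ζ - a))
    convert h using 1
    case e'_3 => rfl
    set w : Aˣ := u * Units.oneSub t hlt with hw
    have hwval : (w : A) = algebraMap ℂ A ζ - (a + b) := by
      have : (u : A) * t = b := by
        rw [ht, hru, ← mul_assoc, u.mul_inv, one_mul]
      rw [hw, Units.val_mul, Units.val_oneSub, mul_sub, mul_one, this, hus]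
      rw [sub_sub]
    rw [← hwval, Ring.inverse_unit w, hw, mul_inv_rev, Units.val_mul,
      ← Ring.inverse_unit (Units.oneSub t hlt), Units.val_oneSub, hru]
  -- pointwise norm bound on the terms
  have hterm : ∀ (j : ℕ), ∀ ζ ∈ sphere c R,
      ‖f ζ • ((Ring.inverse (algebraMap ℂ A ζ - a) * b) ^ j *
          Ring.inverse (algebraMap ℂ A ζ - a))‖ ≤ Cf' * M' * q ^ j := by
    intro j ζ hζ
    rw [norm_smul]
    calc ‖f ζ‖ * ‖(Ring.inverse (algebraMap ℂ A ζ - a) * b) ^ j *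
          Ring.inverse (algebraMap ℂ A ζ - a)‖
        ≤ Cf' * (‖Ring.inverse (algebraMap ℂ A ζ - a) * b‖ ^ j *
            ‖Ring.inverse (algebraMap ℂ A ζ - a)‖) := by
          apply mul_le_mul (hCf' ζ hζ) (taylor_aux_pow_mul_norm _ _ j) (norm_nonneg _)
            hCf'0
    _ ≤ Cf' * (q ^ j * M') := by
          apply mul_le_mul_of_nonneg_left _ hCf'0
          exact mul_le_mul (pow_le_pow_left₀ (norm_nonneg _) (hrb ζ hζ) j)
            (hM' ζ hζ) (norm_nonneg _) (pow_nonneg hq0 j)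
    _ = Cf' * M' * q ^ j := by ring
  have hgeo : Summable (fun j : ℕ => R * (Cf' * M' * q ^ j)) := by
    exact ((summable_geometric_of_lt_one hq0 hq1).mul_left (Cf' * M')).mul_left R
  constructor
  · -- summability of the norms of the integrals
    apply Summable.of_nonneg_of_le (fun j => norm_nonneg _) _ hgeo
    intro j
    exact circleIntegral.norm_two_pi_i_inv_smul_integral_le_of_norm_le_const hR.le
      (hterm j)
  · -- the series identity
    have key : HasSum
        (fun j : ℕ => ∮ ζ in C(c, R), f ζ •
            ((Ring.inverse (algebraMap ℂ A ζ - a) * b) ^ j *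
              Ring.inverse (algebraMap ℂ A ζ - a)))
        (∮ ζ in C(c, R), f ζ • Ring.inverse (algebraMap ℂ A ζ - (a + b))) := by
      simp only [circleIntegral]
      apply intervalIntegral.hasSum_integral_of_dominated_convergence
        (fun j _ => R * (Cf' * M' * q ^ j))
      · intro j
        apply Continuous.aestronglyMeasurable
        rw [continuous_iff_continuousAt]
        intro θ
        have hζs : circleMap c R θ ∈ sphere c R := circleMap_mem_sphere c hR.le θ
        have hc1 : ContinuousAt (circleMap c R) θ := (continuous_circleMap c R).continuousAt
        have hder : ContinuousAt (fun θ => deriv (circleMap c R) θ) θ := by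
          simp only [deriv_circleMap]
          exact ((continuous_circleMap 0 R).mul continuous_const).continuousAt
        have hfc : ContinuousAt (fun θ => f (circleMap c R θ)) θ :=
          ((hf.continuousOn.continuousAt (hU.mem_nhds (hsubU hζs))).comp hc1)
        have hrc : ContinuousAt
            (fun θ => Ring.inverse (algebraMap ℂ A (circleMap c R θ) - a)) θ :=
          (hcont _ hζs).comp hc1
        exact hder.smul (hfc.smul ((hrc.mul continuousAt_const).pow j |>.mul hrc))
      · intro j
        filter_upwards with θ _
        have hζs : circleMap c R θ ∈ sphere c R := circleMap_mem_sphere c hR.le θ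
        rw [norm_smul]
        have hd : ‖deriv (circleMap c R) θ‖ = R := by
          simp [deriv_circleMap, abs_of_pos hR]
        rw [hd]
        exact mul_le_mul_of_nonneg_left (hterm j _ hζs) hR.le
      · filter_upwards with θ _
        exact ((summable_geometric_of_lt_one hq0 hq1).mul_left (Cf' * M')).mul_left R
      · exact intervalIntegrable_const
      · filter_upwards with θ _
        have hζs : circleMap c R θ ∈ sphere c R := circleMap_mem_sphere c hR.le θ
        exact ((hNeu _ hζs).const_smul (f (circleMap c R θ))).const_smul
          (deriv (circleMap c R) θ)
    exact ((key.const_smul ((2 * Real.pi * Complex.I : ℂ))⁻¹).tsum_eq).symm
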